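/- Let p ≥ 2, let f : ℝ^d → ℝ be convex, differentiable, and L-smooth w.r.t. ‖·‖_p with minimizer x*, and let (x_t) be HASD iterates started at x_0 with ‖x_0 − x*‖_2 ≤ R. Suppose Ĝ satisfies 1 ≤ Ĝ ≤ 𝒢_t := (1/t) ∑_{i=0}^{t-1} ‖∇f(x_{i+1})‖_{p*}/‖∇f(x_{i+1})‖_2 for all t ∈ {1, …, T}. Then min_{t ∈ {1,…,T}} ‖∇f(x_t)‖_{p*}² ≤ 8748 L² R² / (Ĝ² T³); in particular, if T ≥ 21 L^{2/3} R^{2/3} / (Ĝ^{2/3} ε^{2/3}) for some ε > 0, then min_{t ∈ {1,…,T}} ‖∇f(x_t)‖_{p*} ≤ ε. -/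

import Mathlib

open scoped BigOperators
open scoped InnerProductSpace

/-- The `ℓ_p` "norm" on `ℝ^d` for a real exponent `p`. -/
noncomputable def pnorm (p : ℝ) {d : ℕ} (x : EuclideanSpace ℝ (Fin d)) : ℝ :=
  (∑ i, |x i| ^ p) ^ (1 / p)

/-- The dual exponent `p* = p/(p-1)`, so that `1/p + 1/p* = 1`. -/
noncomputable def dualExp (p : ℝ) : ℝ := p / (p - 1)

section aux
variable {d : ℕ}

lemma pnorm_nonneg (p : ℝ) (x : EuclideanSpace ℝ (Fin d)) : 0 ≤ pnorm p x :=
  Real.rpow_nonneg (Finset.sum_nonneg fun i _ => Real.rpow_nonneg (abs_nonneg _) _) _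

lemma pnorm_pos {p : ℝ} (hp : 0 < p) {x : EuclideanSpace ℝ (Fin d)} (hx : x ≠ 0) :
    0 < pnorm p x := by
  have hex : ∃ i, x i ≠ 0 := by
    by_contra hc; push_neg at hc
    exact hx (by ext i; exact hc i)
  obtain ⟨i, hi⟩ := hex
  have h1 : (0:ℝ) < |x i| ^ p := Real.rpow_pos_of_pos (abs_pos.2 hi) p
  have h2 : (0:ℝ) < ∑ j, |x j| ^ p :=
    Finset.sum_pos' (fun j _ => Real.rpow_nonneg (abs_nonneg _) _) ⟨i, Finset.mem_univ i, h1⟩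
  exact Real.rpow_pos_of_pos h2 _

lemma pnorm_zero {p : ℝ} (hp : 0 < p) : pnorm p (0 : EuclideanSpace ℝ (Fin d)) = 0 := by
  unfold pnorm
  have : ∀ i : Fin d, |(0 : EuclideanSpace ℝ (Fin d)) i| ^ p = 0 := by
    intro i
    have : (0 : EuclideanSpace ℝ (Fin d)) i = 0 := rfl
    rw [this, abs_zero, Real.zero_rpow (ne_of_gt hp)]
  rw [Finset.sum_congr rfl fun i _ => this i, Finset.sum_const, smul_zero,
    Real.zero_rpow (by positivity)]

lemma pnorm_eq_zero {p : ℝ} (hp : 0 < p) {x : EuclideanSpace ℝ (Fin d)}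
    (hx : pnorm p x = 0) : x = 0 := by
  by_contra hne
  exact absurd hx (ne_of_gt (pnorm_pos hp hne))

lemma pnorm_neg (p : ℝ) (x : EuclideanSpace ℝ (Fin d)) : pnorm p (-x) = pnorm p x := by
  unfold pnorm
  congr 1
  refine Finset.sum_congr rfl fun i _ => ?_
  have : (-x) i = -(x i) := rfl
  rw [this, abs_neg]

lemma pnorm_sub_rev (p : ℝ) (x y : EuclideanSpace ℝ (Fin d)) :
    pnorm p (x - y) = pnorm p (y - x) := by
  rw [← pnorm_neg p (x - y), neg_sub]

lemma pnorm_two_eq_norm (x : EuclideanSpace ℝ (Fin d)) : pnorm 2 x = ‖x‖ := by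
  rw [EuclideanSpace.norm_eq]
  unfold pnorm
  rw [Real.sqrt_eq_rpow]
  congr 1
  refine Finset.sum_congr rfl fun i _ => ?_
  rw [Real.norm_eq_abs, ← Real.rpow_natCast |x i| 2]
  norm_num

lemma inner_eq_sum (u v : EuclideanSpace ℝ (Fin d)) : ⟪u, v⟫_ℝ = ∑ i, u i * v i := by
  simp [PiLp.inner_apply, RCLike.inner_apply, conj_trivial]
  exact Finset.sum_congr rfl fun i _ => mul_comm _ _

lemma pnorm_smul {p : ℝ} (hp : p ≠ 0) (s : ℝ) (x : EuclideanSpace ℝ (Fin d)) :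
    pnorm p (s • x) = |s| * pnorm p x := by
  unfold pnorm
  have h1 : ∀ i, |(s • x) i| ^ p = |s| ^ p * |x i| ^ p := by
    intro i
    have : (s • x) i = s * x i := rfl
    rw [this, abs_mul, Real.mul_rpow (abs_nonneg _) (abs_nonneg _)]
  simp_rw [h1, ← Finset.mul_sum]
  rw [Real.mul_rpow (Real.rpow_nonneg (abs_nonneg _) _)
    (Finset.sum_nonneg fun i _ => Real.rpow_nonneg (abs_nonneg _) _),
    ← Real.rpow_mul (abs_nonneg _), mul_one_div, div_self hp, Real.rpow_one]

lemma pnorm_holder {p q : ℝ} (hpq : p.HolderConjugate q) (u v : EuclideanSpace ℝ (Fin d)) :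
    ⟪u, v⟫_ℝ ≤ pnorm q u * pnorm p v := by
  rw [inner_eq_sum]
  calc ∑ i, u i * v i = ∑ i, v i * u i := Finset.sum_congr rfl fun i _ => mul_comm _ _
    _ ≤ (∑ i, |v i| ^ p) ^ (1/p) * (∑ i, |u i| ^ q) ^ (1/q) :=
        Real.inner_le_Lp_mul_Lq _ _ _ hpq
    _ = pnorm q u * pnorm p v := mul_comm _ _

lemma pnorm_holder' {p q : ℝ} (hpq : p.HolderConjugate q) (u v : EuclideanSpace ℝ (Fin d)) :
    |⟪u, v⟫_ℝ| ≤ pnorm q u * pnorm p v := by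
  rcases abs_cases (⟪u, v⟫_ℝ) with ⟨h, _⟩ | ⟨h, _⟩
  · rw [h]; exact pnorm_holder hpq u v
  · rw [h, ← inner_neg_left]
    calc ⟪-u, v⟫_ℝ ≤ pnorm q (-u) * pnorm p v := pnorm_holder hpq _ v
      _ = pnorm q u * pnorm p v := by rw [pnorm_neg]

lemma pnorm_add_le {p : ℝ} (hp : 1 ≤ p) (u v : EuclideanSpace ℝ (Fin d)) :
    pnorm p (u + v) ≤ pnorm p u + pnorm p v := by
  have := Real.Lp_add_le Finset.univ (fun i => u i) (fun i => v i) hp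
  simpa [pnorm] using this

lemma exists_dual_vec {p q : ℝ} (hpq : p.HolderConjugate q) {g : EuclideanSpace ℝ (Fin d)}
    (hg : g ≠ 0) :
    ∃ w : EuclideanSpace ℝ (Fin d), pnorm p w = 1 ∧ ⟪g, w⟫_ℝ = pnorm q g := by
  set S : ℝ := ∑ i, |g i| ^ q with hSdef
  have hex : ∃ i, g i ≠ 0 := by
    by_contra hc; push_neg at hc; exact hg (by ext i; exact hc i)
  obtain ⟨i0, hi0⟩ := hex
  have hS : 0 < S := by
    refine Finset.sum_pos' (fun j _ => Real.rpow_nonneg (abs_nonneg _) _)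
      ⟨i0, Finset.mem_univ i0, Real.rpow_pos_of_pos (abs_pos.2 hi0) q⟩
  have hq1 : 1 < q := hpq.symm.lt
  have hq1' : (0:ℝ) < q - 1 := by linarith
  have hp0 : (0:ℝ) < p := hpq.pos
  refine ⟨WithLp.toLp 2 (fun i => Real.sign (g i) * |g i| ^ (q - 1) / S ^ (1/p) :
      Fin d → ℝ), ?_, ?_⟩
  · unfold pnorm
    simp only [PiLp.toLp_apply]
    have habs : ∀ i : Fin d, |Real.sign (g i) * |g i| ^ (q - 1) / S ^ (1/p)| ^ p
        = |g i| ^ q / S := by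
      intro i
      rcases eq_or_ne (g i) 0 with h0 | h0
      · rw [h0]
        simp [Real.sign_zero, Real.zero_rpow (ne_of_gt hq1'), abs_zero,
          Real.zero_rpow (ne_of_gt hp0), Real.zero_rpow (ne_of_gt hpq.symm.pos)]
      · have hsign : |Real.sign (g i)| = 1 := by
          rcases lt_trichotomy (g i) 0 with hlt | hlt | hlt
          · rw [Real.sign_of_neg hlt]; norm_num
          · exact absurd hlt h0
          · rw [Real.sign_of_pos hlt]; norm_num
        rw [abs_div, abs_mul, hsign, one_mul, abs_of_nonneg (Real.rpow_nonneg (abs_nonneg _) _),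
          abs_of_nonneg (Real.rpow_nonneg hS.le _),
          Real.div_rpow (Real.rpow_nonneg (abs_nonneg _) _) (Real.rpow_nonneg hS.le _),
          ← Real.rpow_mul (abs_nonneg _), ← Real.rpow_mul hS.le]
        rw [hpq.symm.sub_one_mul_conj, one_div_mul_cancel (ne_of_gt hp0), Real.rpow_one]
    rw [Finset.sum_congr rfl fun i _ => habs i, ← Finset.sum_div, ← hSdef, div_self (ne_of_gt hS),
      Real.one_rpow]
  · rw [inner_eq_sum]
    simp only [PiLp.toLp_apply]
    have hterm : ∀ i : Fin d, g i * (Real.sign (g i) * |g i| ^ (q - 1) / S ^ (1/p))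
        = |g i| ^ q / S ^ (1/p) := by
      intro i
      rcases eq_or_ne (g i) 0 with h0 | h0
      · rw [h0]
        simp [Real.zero_rpow (ne_of_gt hpq.symm.pos)]
      · have hsign : g i * Real.sign (g i) = |g i| := by
          rcases lt_trichotomy (g i) 0 with hlt | hlt | hlt
          · rw [Real.sign_of_neg hlt, abs_of_neg hlt]; ring
          · exact absurd hlt h0
          · rw [Real.sign_of_pos hlt, abs_of_pos hlt]; ring
        have habs0 : (0:ℝ) < |g i| := abs_pos.2 h0
        calc g i * (Real.sign (g i) * |g i| ^ (q - 1) / S ^ (1/p))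
            = (g i * Real.sign (g i)) * |g i| ^ (q - 1) / S ^ (1/p) := by ring
          _ = |g i| ^ (1:ℝ) * |g i| ^ (q - 1) / S ^ (1/p) := by rw [hsign, Real.rpow_one]
          _ = |g i| ^ q / S ^ (1/p) := by rw [← Real.rpow_add habs0]; ring_nf
    rw [Finset.sum_congr rfl fun i _ => hterm i, ← Finset.sum_div, ← hSdef]
    have h1 : S / S ^ (1/p) = S ^ ((1:ℝ) - 1/p) := by
      rw [Real.rpow_sub hS, Real.rpow_one]
    rw [h1]
    have h2 : (1:ℝ) - 1/p = 1/q := by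
      have := hpq.inv_add_inv_eq_one
      rw [one_div, one_div]
      linarith
    rw [h2]
    rfl

lemma grad_inner (f : EuclideanSpace ℝ (Fin d) → ℝ) (hf : Differentiable ℝ f)
    (x v : EuclideanSpace ℝ (Fin d)) : ⟪gradient f x, v⟫_ℝ = fderiv ℝ f x v := by
  have h := (hf x).hasGradientAt.hasFDerivAt
  rw [h.fderiv]
  simp [InnerProductSpace.toDual_apply_apply]

lemma grad_convex_ineq (f : EuclideanSpace ℝ (Fin d) → ℝ)
    (hconv : ConvexOn ℝ Set.univ f) (hf : Differentiable ℝ f)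
    (x z : EuclideanSpace ℝ (Fin d)) :
    f x + ⟪gradient f x, z - x⟫_ℝ ≤ f z := by
  set φ : ℝ → ℝ := fun t => f (x + t • (z - x)) with hφdef
  have hc : HasDerivAt (fun t : ℝ => x + t • (z - x)) (z - x) 0 := by
    simpa using ((hasDerivAt_id (0:ℝ)).smul_const (z - x)).const_add x
  have hφ : HasDerivAt φ (fderiv ℝ f x (z - x)) 0 := by
    have := (hf (x + (0:ℝ) • (z - x))).hasFDerivAt.comp_hasDerivAt 0 hc
    simp only [zero_smul, add_zero] at this
    exact this
  have hline : ∀ t : ℝ, x + t • (z - x) = (1 - t) • x + t • z := by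
    intro t; module
  have hslope : ∀ t ∈ Set.Ioc (0:ℝ) 1, slope φ 0 t ≤ f z - f x := by
    intro t ht
    have hconvt : φ t ≤ (1 - t) * f x + t * f z := by
      have := hconv.2 (Set.mem_univ x) (Set.mem_univ z)
        (by linarith [ht.2] : (0:ℝ) ≤ 1 - t) ht.1.le (by ring)
      simpa [hφdef, hline t, smul_eq_mul] using this
    rw [slope_def_field]
    have h0 : φ 0 = f x := by simp [hφdef]
    rw [h0, sub_zero, div_le_iff₀ ht.1]
    nlinarith [hconvt]
  have htend : Filter.Tendsto (slope φ 0) (nhdsWithin 0 (Set.Ioi 0))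
      (nhds (fderiv ℝ f x (z - x))) := by
    refine (hasDerivAt_iff_tendsto_slope.mp hφ).mono_left (nhdsWithin_mono 0 ?_)
    intro t ht
    exact ne_of_gt ht
  have hle : fderiv ℝ f x (z - x) ≤ f z - f x := by
    refine le_of_tendsto htend ?_
    filter_upwards [Ioc_mem_nhdsGT_of_mem (Set.mem_Ico.2 ⟨le_refl (0:ℝ), zero_lt_one⟩)]
      with t ht using hslope t ht
  rw [grad_inner f hf]
  linarith

lemma quad_min (ψ : EuclideanSpace ℝ (Fin d) → ℝ) (u : EuclideanSpace ℝ (Fin d)) (c : ℝ)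
    (hψ : ∀ z, ψ z = (1/2) * ‖z‖^2 + ⟪u, z⟫_ℝ + c) (v : EuclideanSpace ℝ (Fin d))
    (hv : ∀ z, ψ v ≤ ψ z) :
    ∀ z, ψ z = ψ v + (1/2) * ‖z - v‖^2 := by
  have key : ∀ z, ψ z - ψ v = (1/2) * ‖z - v‖^2 + ⟪v + u, z - v⟫_ℝ := by
    intro z
    have hz : ‖z‖^2 = ‖z - v‖^2 + 2 * ⟪z - v, v⟫_ℝ + ‖v‖^2 := by
      have := norm_add_sq_real (z - v) v
      simpa using this
    have hinner : ⟪u, z⟫_ℝ - ⟪u, v⟫_ℝ = ⟪u, z - v⟫_ℝ := by rw [inner_sub_right]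
    have hexp : ⟪v + u, z - v⟫_ℝ = ⟪z - v, v⟫_ℝ + ⟪u, z - v⟫_ℝ := by
      rw [inner_add_left, real_inner_comm v (z - v)]
    rw [hψ z, hψ v, hexp]
    linarith [hz, hinner]
  have huv : v + u = 0 := by
    by_contra hne
    have h1 := key (v - (v + u))
    have h2 : v - (v + u) - v = -(v + u) := by abel
    rw [h2] at h1
    have h3 : ⟪v + u, -(v + u)⟫_ℝ = -‖v + u‖^2 := by
      rw [inner_neg_right, real_inner_self_eq_norm_sq]
    rw [h3, norm_neg] at h1
    have h4 : (0:ℝ) < ‖v + u‖^2 := pow_pos (norm_pos_iff.mpr hne) 2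
    have h5 := hv (v - (v + u))
    nlinarith
  intro z
  have := key z
  rw [huv] at this
  simp only [inner_zero_left] at this
  linarith

lemma sum_sq_lb : ∀ T : ℕ, (T:ℝ)^3 / 3 ≤ ∑ t ∈ Finset.range T, ((t:ℝ)+1)^2 := by
  intro T
  induction T with
  | zero => simp
  | succ n ih =>
    rw [Finset.sum_range_succ]
    push_cast
    have hn : (0:ℝ) ≤ (n:ℝ) := Nat.cast_nonneg n
    nlinarith [ih]


lemma rpow23_cube {x : ℝ} (hx : 0 ≤ x) : (x ^ ((2:ℝ)/3))^(3:ℕ) = x^2 := by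
  rw [← Real.rpow_natCast (x ^ ((2:ℝ)/3)) 3, ← Real.rpow_mul hx]
  norm_num

end aux

/-- The iterates of the Hyper-Accelerated Steepest Descent (HASD) method for
`f : ℝ^d → ℝ` differentiable, smoothness constant `L > 0`, started at `x0`. -/
structure HASD (d : ℕ) (p L : ℝ) (f : EuclideanSpace ℝ (Fin d) → ℝ)
    (x0 : EuclideanSpace ℝ (Fin d)) where
  x : ℕ → EuclideanSpace ℝ (Fin d)
  y : ℕ → EuclideanSpace ℝ (Fin d)
  v : ℕ → EuclideanSpace ℝ (Fin d)
  a : ℕ → ℝ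
  A : ℕ → ℝ
  ρ : ℕ → ℝ
  ψ : ℕ → EuclideanSpace ℝ (Fin d) → ℝ
  x_zero : x 0 = x0
  A_zero : A 0 = 0
  ψ_zero : ∀ z, ψ 0 z = (1 / 2) * pnorm 2 (z - x0) ^ 2
  /-- `v t` minimizes `ψ t` over `ℝ^d`. -/
  v_min : ∀ t z, ψ t (v t) ≤ ψ t z
  grad_ne : ∀ t : ℕ, gradient f (x (t + 1)) ≠ 0
  ρ_pos : ∀ t : ℕ, 0 < ρ t
  ρ_lb : ∀ t : ℕ, (1 / 2) * (pnorm 2 (gradient f (x (t + 1))) ^ 2 /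
      pnorm (dualExp p) (gradient f (x (t + 1))) ^ 2) ≤ ρ t
  ρ_ub : ∀ t : ℕ, ρ t ≤ 2 * (pnorm 2 (gradient f (x (t + 1))) ^ 2 /
      pnorm (dualExp p) (gradient f (x (t + 1))) ^ 2)
  a_pos : ∀ t : ℕ, 0 < a (t + 1)
  a_eq : ∀ t : ℕ, a (t + 1) ^ 2 = (A t + a (t + 1)) / (18 * L * ρ t)
  A_succ : ∀ t : ℕ, A (t + 1) = A t + a (t + 1)
  y_def : ∀ t : ℕ, y t = (1 - a (t + 1) / A (t + 1)) • x t + (a (t + 1) / A (t + 1)) • v t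
  /-- `x (t+1)` minimizes `z ↦ ⟪∇f(y t), z - y t⟫ + L ‖z - y t‖_p²` over `ℝ^d`. -/
  x_min : ∀ (t : ℕ) (z : EuclideanSpace ℝ (Fin d)),
      ⟪gradient f (y t), x (t + 1) - y t⟫_ℝ + L * pnorm p (x (t + 1) - y t) ^ 2 ≤
      ⟪gradient f (y t), z - y t⟫_ℝ + L * pnorm p (z - y t) ^ 2
  ψ_succ : ∀ (t : ℕ) (z : EuclideanSpace ℝ (Fin d)),
      ψ (t + 1) z = ψ t z + a (t + 1) * (f (x (t + 1)) + ⟪gradient f (x (t + 1)), z - x (t + 1)⟫_ℝ)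

set_option maxHeartbeats 1000000 in
theorem stmt10 {d : ℕ} (p L : ℝ) (hp : 2 ≤ p) (hL : 0 < L)
    (f : EuclideanSpace ℝ (Fin d) → ℝ) (hconv : ConvexOn ℝ Set.univ f)
    (hf : Differentiable ℝ f)
    (hsmooth : ∀ x y : EuclideanSpace ℝ (Fin d),
      pnorm (dualExp p) (gradient f y - gradient f x) ≤ L * pnorm p (y - x))
    (xstar : EuclideanSpace ℝ (Fin d)) (hxstar : ∀ z, f xstar ≤ f z)
    (x0 : EuclideanSpace ℝ (Fin d)) (h : HASD d p L f x0)
    (R : ℝ) (hR : pnorm 2 (x0 - xstar) ≤ R)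
    (Ghat : ℝ) (hGhat : 1 ≤ Ghat)
    (T : ℕ) (hT : 1 ≤ T)
    (hG : ∀ t : ℕ, 1 ≤ t → t ≤ T →
      Ghat ≤ (1 / (t : ℝ)) * ∑ i ∈ Finset.range t,
        pnorm (dualExp p) (gradient f (h.x (i + 1))) / pnorm 2 (gradient f (h.x (i + 1)))) :
    (∃ t : ℕ, 1 ≤ t ∧ t ≤ T ∧
      pnorm (dualExp p) (gradient f (h.x t)) ^ 2 ≤
        8748 * L ^ 2 * R ^ 2 / (Ghat ^ 2 * (T : ℝ) ^ 3)) ∧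
    (∀ ε : ℝ, 0 < ε →
      21 * L ^ ((2 : ℝ) / 3) * R ^ ((2 : ℝ) / 3) / (Ghat ^ ((2 : ℝ) / 3) * ε ^ ((2 : ℝ) / 3)) ≤
        (T : ℝ) →
      ∃ t : ℕ, 1 ≤ t ∧ t ≤ T ∧ pnorm (dualExp p) (gradient f (h.x t)) ≤ ε) := by
  classical
  have hp1 : (1:ℝ) < p := by linarith
  have hpq : p.HolderConjugate (dualExp p) := Real.HolderConjugate.conjExponent hp1
  have hq0 : (0:ℝ) < dualExp p := hpq.symm.pos
  have hq1 : (1:ℝ) ≤ dualExp p := hpq.symm.lt.le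
  set G : ℕ → EuclideanSpace ℝ (Fin d) := fun t => gradient f (h.x (t+1)) with hGdef
  set N : ℕ → ℝ := fun t => pnorm (dualExp p) (G t) with hNdef
  set E : ℕ → ℝ := fun t => pnorm 2 (G t) with hEdef
  have hNpos : ∀ t, 0 < N t := fun t => pnorm_pos hq0 (h.grad_ne t)
  have hEpos : ∀ t, 0 < E t := fun t => pnorm_pos (by norm_num) (h.grad_ne t)
  have hAnn : ∀ t, 0 ≤ h.A t := by
    intro t
    induction t with
    | zero => rw [h.A_zero]
    | succ n ih => rw [h.A_succ]; linarith [h.a_pos n]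
  have hApos : ∀ t, 0 < h.A (t+1) := by
    intro t
    rw [h.A_succ]
    linarith [h.a_pos t, hAnn t]
  -- Step inequality (key geometric fact about the steepest-descent step)
  have hkey0 : ∀ yt xt1 : EuclideanSpace ℝ (Fin d),
      (∀ z, ⟪gradient f yt, xt1 - yt⟫_ℝ + L * pnorm p (xt1 - yt) ^ 2 ≤
        ⟪gradient f yt, z - yt⟫_ℝ + L * pnorm p (z - yt) ^ 2) →
      gradient f xt1 ≠ 0 →
      pnorm (dualExp p) (gradient f xt1) ^ 2 ≤
        9 * L * ⟪gradient f xt1, yt - xt1⟫_ℝ := by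
    intro yt xt1 hmin hne
    set gy := gradient f yt with hgydef
    set gx := gradient f xt1 with hgxdef
    set r := pnorm p (xt1 - yt) with hrdef
    set Gq := pnorm (dualExp p) gy with hGqdef
    clear_value gy gx r Gq
    have hp0 : (0:ℝ) < p := by linarith
    have hr0 : 0 ≤ r := by rw [hrdef]; exact pnorm_nonneg _ _
    have hgy0 : gy ≠ 0 := by
      intro h0
      have hx := hmin yt
      rw [sub_self, h0, inner_zero_left, inner_zero_left, pnorm_zero hp0] at hx
      have hr2 : r ^ 2 ≤ 0 := by
        by_contra hc
        push_neg at hc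
        nlinarith [mul_pos hL hc, hx]
      have hr00 : r = 0 :=
        pow_eq_zero_iff (n := 2) (by norm_num) |>.mp (le_antisymm hr2 (sq_nonneg r))
      rw [hrdef] at hr00
      have : xt1 - yt = 0 := pnorm_eq_zero hp0 hr00
      have hxy : xt1 = yt := by
        have := sub_eq_zero.mp this; exact this
      apply hne
      rw [hgxdef, hxy, ← hgydef, h0]
    obtain ⟨w, hw1, hw2⟩ := exists_dual_vec hpq hgy0
    set s := Gq / (2*L) with hsdef
    clear_value s
    have hGq0 : 0 ≤ Gq := by rw [hGqdef]; exact pnorm_nonneg _ _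
    have hs0 : 0 ≤ s := by rw [hsdef]; exact div_nonneg hGq0 (by linarith)
    have hGq2 : Gq = 2*L*s := by
      rw [hsdef]; field_simp
    have hz := hmin (yt - s • w)
    have hzsub : yt - s • w - yt = (-s) • w := by module
    rw [hzsub, real_inner_smul_right, hw2, ← hGqdef, pnorm_smul (ne_of_gt hp0), hw1,
      abs_neg, abs_of_nonneg hs0] at hz
    -- hz : ⟪gy, xt1 - yt⟫ + L * r^2 ≤ -s * Gq + L * (s*1)^2
    rw [hGq2] at hz
    have hz' : ⟪gy, xt1 - yt⟫_ℝ + L*r^2 ≤ -(L*s^2) := by linarith [hz]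
    have hH1 : ⟪gy, yt - xt1⟫_ℝ ≤ Gq * r := by
      have hh := pnorm_holder hpq gy (yt - xt1)
      rw [pnorm_sub_rev p yt xt1, ← hrdef, ← hGqdef] at hh
      exact hh
    have hlow : L*s^2 + L*r^2 ≤ ⟪gy, yt - xt1⟫_ℝ := by
      have hneg : ⟪gy, yt - xt1⟫_ℝ = -⟪gy, xt1 - yt⟫_ℝ := by
        rw [show yt - xt1 = -(xt1 - yt) by abel, inner_neg_right]
      rw [hneg]; linarith [hz']
    have hrs : r = s := by
      rw [hGq2] at hH1
      have h1' : L*(r - s)^2 ≤ 0 := by linarith [hH1, hlow]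
      have h1 : (r - s)^2 ≤ 0 := by
        by_contra hc
        push_neg at hc
        nlinarith [mul_pos hL hc]
      have h2 := sq_nonneg (r - s)
      have h3 : (r - s)^2 = 0 := le_antisymm h1 h2
      have h4 := pow_eq_zero_iff (n := 2) (by norm_num) |>.mp h3
      linarith [sub_eq_zero.mp h4, h4]
    -- smoothness
    have hsm : pnorm (dualExp p) (gx - gy) ≤ L * r := by
      have := hsmooth yt xt1
      rw [← hgxdef, ← hgydef, ← hrdef] at this
      exact this
    have hH2 : |⟪gx - gy, yt - xt1⟫_ℝ| ≤ (L*r)*r := by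
      have hh := pnorm_holder' hpq (gx - gy) (yt - xt1)
      have hre : pnorm p (yt - xt1) = r := by rw [pnorm_sub_rev p yt xt1, ← hrdef]
      rw [hre] at hh
      calc |⟪gx - gy, yt - xt1⟫_ℝ| ≤ pnorm (dualExp p) (gx - gy) * r := hh
        _ ≤ (L*r)*r := by
            apply mul_le_mul_of_nonneg_right hsm hr0
    have hsplit : ⟪gx, yt - xt1⟫_ℝ = ⟪gy, yt - xt1⟫_ℝ + ⟪gx - gy, yt - xt1⟫_ℝ := by
      rw [← inner_add_left]
      congr 1
      abel
    have hfin1 : L*s^2 ≤ ⟪gx, yt - xt1⟫_ℝ := by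
      have := (abs_le.mp hH2).1
      rw [hsplit]
      linarith [hlow, this]
    have hNle : pnorm (dualExp p) gx ≤ 3*(L*s) := by
      have hdc : gx = gy + (gx - gy) := by abel
      calc pnorm (dualExp p) gx = pnorm (dualExp p) (gy + (gx - gy)) := by rw [← hdc]
        _ ≤ Gq + pnorm (dualExp p) (gx - gy) := by
            have := pnorm_add_le hq1 gy (gx - gy)
            rw [← hGqdef] at this
            exact this
        _ ≤ 2*L*s + L*r := by linarith [hsm, hGq2]
        _ = 3*(L*s) := by rw [hrs]; ring
    have hNx0 : 0 ≤ pnorm (dualExp p) gx := pnorm_nonneg _ _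
    nlinarith [mul_self_le_mul_self hNx0 hNle, hfin1, hL, hs0, sq_nonneg s]
  have hkey : ∀ t, (N t)^2 ≤ 9 * L * ⟪G t, h.y t - h.x (t+1)⟫_ℝ := by
    intro t
    exact hkey0 (h.y t) (h.x (t+1)) (h.x_min t) (h.grad_ne t)
  -- interface restatements (before clearing the bodies of G, N, E)
  have hρl : ∀ t, (1/2) * ((E t)^2 / (N t)^2) ≤ h.ρ t := by
    intro t
    have := h.ρ_lb t
    simp only [hNdef, hEdef, hGdef]
    exact this
  have hρu : ∀ t, h.ρ t ≤ 2 * ((E t)^2 / (N t)^2) := by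
    intro t
    have := h.ρ_ub t
    simp only [hNdef, hEdef, hGdef]
    exact this
  have hGratio : ∀ t : ℕ, 1 ≤ t → t ≤ T →
      Ghat ≤ (1/(t:ℝ)) * ∑ i ∈ Finset.range t, N i / E i := by
    intro t h1 h2
    have := hG t h1 h2
    simp only [hNdef, hEdef, hGdef]
    exact this
  have hcvx : ∀ (n : ℕ) (z : EuclideanSpace ℝ (Fin d)),
      f (h.x (n+1)) + ⟪G n, z - h.x (n+1)⟫_ℝ ≤ f z := by
    intro n z
    have := grad_convex_ineq f hconv hf (h.x (n+1)) z
    simp only [hGdef]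
    exact this
  have hψs : ∀ (n : ℕ) (z : EuclideanSpace ℝ (Fin d)),
      h.ψ (n+1) z = h.ψ n z + h.a (n+1) * (f (h.x (n+1)) + ⟪G n, z - h.x (n+1)⟫_ℝ) := by
    intro n z
    simp only [hGdef]
    exact h.ψ_succ n z
  have hEnrm : ∀ t, ‖G t‖ = E t := by
    intro t
    simp only [hEdef]
    exact (pnorm_two_eq_norm (G t)).symm
  clear_value G N E
  -- bounds on a_{t+1}
  have hprod : ∀ t, h.a (t+1)^2 * (18 * L * h.ρ t) = h.A (t+1) := by
    intro t
    rw [h.a_eq t, div_mul_cancel₀ _ (ne_of_gt (by have := h.ρ_pos t; positivity)), h.A_succ t]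
  have haU : ∀ t, h.a (t+1)^2 * (E t)^2 * 9 * L ≤ h.A (t+1) * (N t)^2 := by
    intro t
    have hN2 : (0:ℝ) < (N t)^2 := pow_pos (hNpos t) 2
    have hEN : (E t)^2 ≤ 2 * h.ρ t * (N t)^2 := by
      have h1 := hρl t
      have h2 : (E t)^2/(N t)^2 ≤ 2 * h.ρ t := by linarith
      calc (E t)^2 = ((E t)^2/(N t)^2) * (N t)^2 := (div_mul_cancel₀ _ (ne_of_gt hN2)).symm
        _ ≤ 2*h.ρ t*(N t)^2 := mul_le_mul_of_nonneg_right h2 hN2.le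
    rw [← hprod t]
    have h3 := mul_le_mul_of_nonneg_left hEN (by positivity : (0:ℝ) ≤ 9*L*h.a (t+1)^2)
    linarith [h3]
  have haL : ∀ t, h.A (t+1) * (N t)^2 ≤ h.a (t+1)^2 * (E t)^2 * 36 * L := by
    intro t
    have hN2 : (0:ℝ) < (N t)^2 := pow_pos (hNpos t) 2
    have hNE : h.ρ t * (N t)^2 ≤ 2*(E t)^2 := by
      have h2 := hρu t
      calc h.ρ t * (N t)^2 ≤ (2*((E t)^2/(N t)^2))*(N t)^2 :=
            mul_le_mul_of_nonneg_right h2 hN2.le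
        _ = 2*(E t)^2 := by rw [mul_assoc, div_mul_cancel₀ _ (ne_of_gt hN2)]
    rw [← hprod t]
    have h3 := mul_le_mul_of_nonneg_left hNE (by positivity : (0:ℝ) ≤ 18*L*h.a (t+1)^2)
    linarith [h3]
  -- quadratic structure of ψ
  have hψaff : ∀ n, ∃ u c, ∀ z, h.ψ n z = (1/2)*‖z‖^2 + ⟪u, z⟫_ℝ + c := by
    intro n
    induction n with
    | zero =>
      refine ⟨-x0, (1/2)*‖x0‖^2, fun z => ?_⟩
      rw [h.ψ_zero z, pnorm_two_eq_norm]
      have h1 := norm_sub_sq_real z x0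
      have h2 : ⟪-x0, z⟫_ℝ = -⟪z, x0⟫_ℝ := by rw [inner_neg_left, real_inner_comm]
      rw [h2]
      linarith [h1]
    | succ n ih =>
      obtain ⟨u, c, hu⟩ := ih
      refine ⟨u + h.a (n+1) • G n,
        c + h.a (n+1) * (f (h.x (n+1)) - ⟪G n, h.x (n+1)⟫_ℝ), fun z => ?_⟩
      rw [hψs n z, hu z, inner_add_left, real_inner_smul_left, inner_sub_right]
      ring
  have hψq : ∀ n z, h.ψ n z = h.ψ n (h.v n) + (1/2)*‖z - h.v n‖^2 := by
    intro n
    obtain ⟨u, c, hu⟩ := hψaff n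
    exact quad_min (h.ψ n) u c hu (h.v n) (h.v_min n)
  -- the y identity
  have hyid : ∀ n, h.A (n+1) * ⟪G n, h.y n - h.x (n+1)⟫_ℝ
      = h.A n * ⟪G n, h.x n - h.x (n+1)⟫_ℝ + h.a (n+1) * ⟪G n, h.v n - h.x (n+1)⟫_ℝ := by
    intro n
    have hA1 : h.A (n+1) ≠ 0 := ne_of_gt (hApos n)
    rw [h.y_def n, inner_sub_right, inner_sub_right, inner_sub_right, inner_add_right,
      real_inner_smul_right, real_inner_smul_right]
    have hAn : h.A n = h.A (n+1) - h.a (n+1) := by have := h.A_succ n; linarith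
    rw [hAn]
    field_simp
    ring
  -- the main potential induction
  have hmain : ∀ n, 18*L*(h.A n * f (h.x n)) +
      (∑ t ∈ Finset.range n, h.A (t+1) * (N t)^2) ≤ 18*L*h.ψ n (h.v n) := by
    intro n
    induction n with
    | zero =>
      rw [h.A_zero, Finset.range_zero, Finset.sum_empty, h.ψ_zero]
      have h0 : (0:ℝ) ≤ (1/2) * pnorm 2 (h.v 0 - x0)^2 := by positivity
      have h1 : (0:ℝ) ≤ 18*L*((1/2) * pnorm 2 (h.v 0 - x0)^2) :=
        mul_nonneg (by linarith) h0
      simp only [zero_mul, mul_zero, add_zero, zero_add]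
      linarith [h1]
    | succ n ih =>
      have e1 : h.ψ (n+1) (h.v (n+1)) = h.ψ n (h.v n) + (1/2)*‖h.v (n+1) - h.v n‖^2
          + h.a (n+1) * (f (h.x (n+1)) +
            (⟪G n, h.v n - h.x (n+1)⟫_ℝ + ⟪G n, h.v (n+1) - h.v n⟫_ℝ)) := by
        have hsp : ⟪G n, h.v (n+1) - h.x (n+1)⟫_ℝ
            = ⟪G n, h.v n - h.x (n+1)⟫_ℝ + ⟪G n, h.v (n+1) - h.v n⟫_ℝ := by
          rw [← inner_add_right]
          congr 1
          abel
        rw [hψs n (h.v (n+1)), hψq n (h.v (n+1)), hsp]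
      have e1' : 18*L*h.ψ (n+1) (h.v (n+1)) = 18*L*h.ψ n (h.v n)
          + 9*L*‖h.v (n+1) - h.v n‖^2
          + 18*L*(h.a (n+1) * (f (h.x (n+1)) +
            (⟪G n, h.v n - h.x (n+1)⟫_ℝ + ⟪G n, h.v (n+1) - h.v n⟫_ℝ))) := by
        rw [e1]
        ring
      have e3 : -(h.a (n+1)^2 * (E n)^2)/2 ≤ h.a (n+1) * ⟪G n, h.v (n+1) - h.v n⟫_ℝ
          + (1/2)*‖h.v (n+1) - h.v n‖^2 := by
        have hcs := abs_real_inner_le_norm (G n) (h.v (n+1) - h.v n)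
        rw [hEnrm n] at hcs
        have h1 : -(E n * ‖h.v (n+1) - h.v n‖) ≤ ⟪G n, h.v (n+1) - h.v n⟫_ℝ :=
          (abs_le.mp hcs).1
        have h2 := mul_le_mul_of_nonneg_left h1 (h.a_pos n).le
        have h3 := sq_nonneg (‖h.v (n+1) - h.v n‖ - h.a (n+1) * E n)
        nlinarith [h2, h3]
      have e3' := mul_le_mul_of_nonneg_left e3 (by linarith : (0:ℝ) ≤ 18*L)
      have e4 : h.A n * (f (h.x (n+1)) + ⟪G n, h.x n - h.x (n+1)⟫_ℝ) ≤ h.A n * f (h.x n) :=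
        mul_le_mul_of_nonneg_left (hcvx n (h.x n)) (hAnn n)
      have e4' := mul_le_mul_of_nonneg_left e4 (by linarith : (0:ℝ) ≤ 18*L)
      have e6 : h.A (n+1) * (N n)^2 ≤ h.A (n+1) * (9*L*⟪G n, h.y n - h.x (n+1)⟫_ℝ) :=
        mul_le_mul_of_nonneg_left (hkey n) (hAnn (n+1))
      have e5 := hyid n
      have e5' : 18*L*(h.A (n+1) * ⟪G n, h.y n - h.x (n+1)⟫_ℝ)
          = 18*L*(h.A n * ⟪G n, h.x n - h.x (n+1)⟫_ℝ
            + h.a (n+1) * ⟪G n, h.v n - h.x (n+1)⟫_ℝ) := by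
        rw [e5]
      have e7 := haU n
      rw [Finset.sum_range_succ]
      rw [h.A_succ n] at e5' e6 e7 ⊢
      linarith [ih, e1', e3', e4', e5', e6, e7]
  -- upper bound on ψ at xstar
  have hup : ∀ n, h.ψ n xstar ≤ (1/2)*‖xstar - x0‖^2 + h.A n * f xstar := by
    intro n
    induction n with
    | zero =>
      rw [h.ψ_zero, h.A_zero, pnorm_two_eq_norm]
      simp
    | succ n ih =>
      rw [hψs n xstar, h.A_succ n]
      have h2 := mul_le_mul_of_nonneg_left (hcvx n xstar) (h.a_pos n).le
      linarith [ih, h2]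
  have hR0 : (0:ℝ) ≤ R := le_trans (pnorm_nonneg _ _) hR
  have hsum : ∑ t ∈ Finset.range T, h.A (t+1) * (N t)^2 ≤ 9*L*R^2 := by
    have h1 := hmain T
    have h2 := h.v_min T xstar
    have h3 := hup T
    have h4 : h.A T * f xstar ≤ h.A T * f (h.x T) :=
      mul_le_mul_of_nonneg_left (hxstar _) (hAnn T)
    have h5 : ‖xstar - x0‖ ≤ R := by
      rw [← pnorm_two_eq_norm, pnorm_sub_rev]
      exact hR
    have h6 : ‖xstar - x0‖^2 ≤ R^2 := by nlinarith [norm_nonneg (xstar - x0), h5]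
    have h2' := mul_le_mul_of_nonneg_left h2 (by linarith : (0:ℝ) ≤ 18*L)
    have h3' := mul_le_mul_of_nonneg_left h3 (by linarith : (0:ℝ) ≤ 18*L)
    have h4' := mul_le_mul_of_nonneg_left h4 (by linarith : (0:ℝ) ≤ 18*L)
    have h6' := mul_le_mul_of_nonneg_left h6 (by linarith : (0:ℝ) ≤ 9*L)
    linarith [h1, h2', h3', h4', h6']
  -- lower bound on A_t
  have hsL : 0 < Real.sqrt L := Real.sqrt_pos.mpr hL
  have hsqA : ∀ n, (1/(12*Real.sqrt L)) * ∑ i ∈ Finset.range n, N i / E i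
      ≤ Real.sqrt (h.A n) := by
    intro n
    induction n with
    | zero => simp [h.A_zero]
    | succ n ih =>
      rw [Finset.sum_range_succ]
      have hsA0 : 0 ≤ Real.sqrt (h.A n) := Real.sqrt_nonneg _
      have hsA'pos : 0 < Real.sqrt (h.A (n+1)) := Real.sqrt_pos.mpr (hApos n)
      have hAeq : Real.sqrt (h.A n)^2 = h.A n := Real.sq_sqrt (hAnn n)
      have hA'eq : Real.sqrt (h.A (n+1))^2 = h.A (n+1) := Real.sq_sqrt (hAnn _)
      have hmono : Real.sqrt (h.A n) ≤ Real.sqrt (h.A (n+1)) := by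
        apply Real.sqrt_le_sqrt
        rw [h.A_succ n]
        linarith [h.a_pos n]
      have h1 := haL n
      have hLs : Real.sqrt L ^ 2 = L := Real.sq_sqrt hL.le
      have hrw1 : (Real.sqrt (h.A (n+1)) * N n)^2 = h.A (n+1) * (N n)^2 := by
        rw [mul_pow, hA'eq]
      have hrw2 : (6*Real.sqrt L*(h.a (n+1)*E n))^2 = h.a (n+1)^2*(E n)^2*36*L := by
        rw [mul_pow, mul_pow, mul_pow, hLs]
        ring
      have hsq : (Real.sqrt (h.A (n+1)) * N n)^2 ≤ (6*Real.sqrt L*(h.a (n+1)*E n))^2 := by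
        rw [hrw1, hrw2]
        exact h1
      have h2 : Real.sqrt (h.A (n+1)) * N n ≤ 6*Real.sqrt L*(h.a (n+1)*E n) := by
        have hl0 : 0 ≤ Real.sqrt (h.A (n+1)) * N n := mul_nonneg hsA'pos.le (hNpos n).le
        have hr0' : 0 ≤ 6*Real.sqrt L*(h.a (n+1)*E n) := by
          have := h.a_pos n
          have := hEpos n
          positivity
        have h3 := Real.sqrt_le_sqrt hsq
        rwa [Real.sqrt_sq hl0, Real.sqrt_sq hr0'] at h3
      have ha' : h.a (n+1) = Real.sqrt (h.A (n+1))^2 - Real.sqrt (h.A n)^2 := by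
        rw [hAeq, hA'eq, h.A_succ n]
        ring
      have e4 : 0 ≤ 6*Real.sqrt L * E n *
          (Real.sqrt (h.A (n+1)) - Real.sqrt (h.A n))^2 := by
        have := hEpos n
        positivity
      have h3 : Real.sqrt (h.A (n+1)) * N n
          ≤ 12*Real.sqrt L*E n*(Real.sqrt (h.A (n+1)) - Real.sqrt (h.A n))
            * Real.sqrt (h.A (n+1)) := by
        rw [ha'] at h2
        nlinarith [h2, e4]
      have h4 : N n * Real.sqrt (h.A (n+1))
          ≤ (12*Real.sqrt L*E n*(Real.sqrt (h.A (n+1)) - Real.sqrt (h.A n)))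
            * Real.sqrt (h.A (n+1)) := by linarith [h3]
      have h5 := le_of_mul_le_mul_right h4 hsA'pos
      have h6 : N n / E n ≤ 12*Real.sqrt L*(Real.sqrt (h.A (n+1)) - Real.sqrt (h.A n)) := by
        rw [div_le_iff₀ (hEpos n)]
        linarith [h5]
      have h7 : (1/(12*Real.sqrt L))*(N n/E n)
          ≤ Real.sqrt (h.A (n+1)) - Real.sqrt (h.A n) := by
        have h8 := mul_le_mul_of_nonneg_left h6 (by positivity : (0:ℝ) ≤ 1/(12*Real.sqrt L))
        have h9 : (1/(12*Real.sqrt L))*(12*Real.sqrt L*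
            (Real.sqrt (h.A (n+1)) - Real.sqrt (h.A n)))
            = Real.sqrt (h.A (n+1)) - Real.sqrt (h.A n) := by
          field_simp
        rw [h9] at h8
        exact h8
      linarith [ih, h7]
  have hGhat0 : (0:ℝ) < Ghat := by linarith
  have hAlb : ∀ t : ℕ, 1 ≤ t → t ≤ T → Ghat^2 * (t:ℝ)^2 ≤ 144*L*h.A t := by
    intro t h1t htT
    have htpos : (0:ℝ) < (t:ℝ) := by
      have : 0 < t := by omega
      exact_mod_cast this
    have hGt := hGratio t h1t htT
    have h1 : (t:ℝ)*Ghat ≤ ∑ i ∈ Finset.range t, N i / E i := by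
      have h2 := mul_le_mul_of_nonneg_left hGt htpos.le
      have h3 : (t:ℝ)*((1/(t:ℝ))*∑ i ∈ Finset.range t, N i / E i)
          = ∑ i ∈ Finset.range t, N i / E i := by
        field_simp
      linarith [h2, h3]
    have h4 : (1/(12*Real.sqrt L))*((t:ℝ)*Ghat) ≤ Real.sqrt (h.A t) := by
      calc (1/(12*Real.sqrt L))*((t:ℝ)*Ghat)
          ≤ (1/(12*Real.sqrt L))*∑ i ∈ Finset.range t, N i / E i :=
            mul_le_mul_of_nonneg_left h1 (by positivity)
        _ ≤ Real.sqrt (h.A t) := hsqA t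
    have h5 : 0 ≤ (1/(12*Real.sqrt L))*((t:ℝ)*Ghat) :=
      mul_nonneg (by positivity) (mul_nonneg htpos.le hGhat0.le)
    have h6 := mul_self_le_mul_self h5 h4
    rw [Real.mul_self_sqrt (hAnn t)] at h6
    have hLs : Real.sqrt L * Real.sqrt L = L := Real.mul_self_sqrt hL.le
    have h7 : (1/(12*Real.sqrt L))*((t:ℝ)*Ghat) * ((1/(12*Real.sqrt L))*((t:ℝ)*Ghat))
        = ((t:ℝ)*Ghat)^2 * (1/(144*(Real.sqrt L*Real.sqrt L))) := by ring
    rw [h7, hLs] at h6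
    have h9 : ((t:ℝ)*Ghat)^2 * (1/(144*L)) * (144*L) = ((t:ℝ)*Ghat)^2 := by field_simp
    have h10 := mul_le_mul_of_nonneg_right h6 (by positivity : (0:ℝ) ≤ 144*L)
    rw [h9] at h10
    calc Ghat^2*(t:ℝ)^2 = ((t:ℝ)*Ghat)^2 := by ring
      _ ≤ h.A t * (144*L) := h10
      _ = 144*L*h.A t := by ring
  have hTpos : (0:ℝ) < (T:ℝ) := by
    have : 0 < T := by omega
    exact_mod_cast this
  -- PART 1
  have part1 : ∃ t : ℕ, 1 ≤ t ∧ t ≤ T ∧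
      pnorm (dualExp p) (gradient f (h.x t)) ^ 2 ≤ 8748*L^2*R^2/(Ghat^2*(T:ℝ)^3) := by
    obtain ⟨i0, hi0mem, hi0min⟩ := Finset.exists_min_image (Finset.range T) (fun i => N i)
      ⟨0, Finset.mem_range.mpr (by omega)⟩
    have hi0T : i0 < T := Finset.mem_range.mp hi0mem
    have hlb : ∀ t ∈ Finset.range T,
        (N i0)^2*Ghat^2*((t:ℝ)+1)^2 ≤ 144*L*(h.A (t+1) * (N t)^2) := by
      intro t htm
      have ht2 : t+1 ≤ T := Finset.mem_range.mp htm
      have hA := hAlb (t+1) (by omega) ht2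
      push_cast at hA
      have hNt : N i0 ≤ N t := hi0min t htm
      have hN2 : (N i0)^2 ≤ (N t)^2 := by nlinarith [hNpos i0, hNt]
      have h1 : (N i0)^2*(Ghat^2*((t:ℝ)+1)^2) ≤ (N t)^2*(Ghat^2*((t:ℝ)+1)^2) :=
        mul_le_mul_of_nonneg_right hN2 (by positivity)
      have h2 := mul_le_mul_of_nonneg_left hA (sq_nonneg (N t))
      nlinarith [h1, h2]
    have hs1 := Finset.sum_le_sum hlb
    have hs2 : (N i0)^2*Ghat^2 * ∑ t ∈ Finset.range T, ((t:ℝ)+1)^2 ≤ 144*L*(9*L*R^2) := by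
      calc (N i0)^2*Ghat^2 * ∑ t ∈ Finset.range T, ((t:ℝ)+1)^2
          = ∑ t ∈ Finset.range T, (N i0)^2*Ghat^2*((t:ℝ)+1)^2 := by
            rw [Finset.mul_sum]
        _ ≤ ∑ t ∈ Finset.range T, 144*L*(h.A (t+1) * (N t)^2) := hs1
        _ = 144*L*∑ t ∈ Finset.range T, h.A (t+1) * (N t)^2 := by
            rw [Finset.mul_sum]
        _ ≤ 144*L*(9*L*R^2) := mul_le_mul_of_nonneg_left hsum (by positivity)
    have hT3 := sum_sq_lb T
    have hk0 : (0:ℝ) ≤ (N i0)^2*Ghat^2 := by positivity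
    have hs3 := mul_le_mul_of_nonneg_left hT3 hk0
    have hfin : (N i0)^2 * (Ghat^2*(T:ℝ)^3) ≤ 3888*L^2*R^2 := by nlinarith [hs2, hs3]
    refine ⟨i0+1, by omega, hi0T, ?_⟩
    have hgoal : pnorm (dualExp p) (gradient f (h.x (i0+1))) = N i0 := by
      simp only [hNdef, hGdef]
    have hden : (0:ℝ) < Ghat^2*(T:ℝ)^3 := mul_pos (pow_pos hGhat0 2) (pow_pos hTpos 3)
    rw [hgoal, le_div_iff₀ hden]
    have hLR : (0:ℝ) ≤ L^2*R^2 := by positivity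
    linarith [hfin, hLR]
  refine ⟨part1, ?_⟩
  -- PART 2
  intro ε hε hTe
  obtain ⟨t, ht1, ht2, ht3⟩ := part1
  refine ⟨t, ht1, ht2, ?_⟩
  have hcube : (21 * L ^ ((2:ℝ)/3) * R ^ ((2:ℝ)/3) / (Ghat ^ ((2:ℝ)/3) * ε ^ ((2:ℝ)/3)))^(3:ℕ)
      = 9261*L^2*R^2/(Ghat^2*ε^2) := by
    rw [div_pow, mul_pow, mul_pow, mul_pow, rpow23_cube hL.le, rpow23_cube hR0,
      rpow23_cube hGhat0.le, rpow23_cube hε.le]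
    norm_num
  have hB0 : 0 ≤ 21 * L ^ ((2:ℝ)/3) * R ^ ((2:ℝ)/3) / (Ghat ^ ((2:ℝ)/3) * ε ^ ((2:ℝ)/3)) := by
    positivity
  have hTc : 9261*L^2*R^2/(Ghat^2*ε^2) ≤ (T:ℝ)^3 := by
    rw [← hcube]
    exact pow_le_pow_left₀ hB0 hTe 3
  have hden : (0:ℝ) < Ghat^2*(T:ℝ)^3 := mul_pos (pow_pos hGhat0 2) (pow_pos hTpos 3)
  have hb2 : 8748*L^2*R^2/(Ghat^2*(T:ℝ)^3) ≤ ε^2 := by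
    rw [div_le_iff₀ hden]
    have h1 := mul_le_mul_of_nonneg_left hTc (by positivity : (0:ℝ) ≤ ε^2*Ghat^2)
    have h2 : ε^2*Ghat^2*(9261*L^2*R^2/(Ghat^2*ε^2)) = 9261*L^2*R^2 := by
      field_simp
    rw [h2] at h1
    have h3 : (0:ℝ) ≤ L^2*R^2 := by positivity
    linarith [h1, h3]
  have hN0 : 0 ≤ pnorm (dualExp p) (gradient f (h.x t)) := pnorm_nonneg _ _
  nlinarith [ht3, hb2, hN0, hε]
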